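/- Let N be a positive integer, let c ∈ EuclideanSpace ℂ (Fin N) be a unit vector with coordinates c_j, and fix k ∈ Fin N. Define r_k = |c_k|. Then ‖(1/2)(c ⊗ e_k + e_k ⊗ c)‖ = √((1 + r_k²)/2) and ‖(1/2)(c ⊗ e_k − e_k ⊗ c)‖ = √((1 − r_k²)/2). (These are the coefficients α_k and β_k appearing in the swap-test decomposition of the abs-QADC state |Ψ_k⟩ in the Appendix.) -/

import Mathlib

open scoped BigOperators

noncomputable section

/-- Concrete realization of the Hilbert-space tensor product of two Euclidean spaces:
`(tp x y) (i, k) = x i * y k`.  The `L²` inner product on `EuclideanSpace ℂ (ι × κ)` is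
exactly the induced inner product `⟪a ⊗ b, c ⊗ d⟫ = ⟪a, c⟫ * ⟪b, d⟫`. -/
def tp {ι κ : Type*} [Fintype ι] [Fintype κ]
    (x : EuclideanSpace ℂ ι) (y : EuclideanSpace ℂ κ) : EuclideanSpace ℂ (ι × κ) :=
  (WithLp.equiv 2 ((ι × κ) → ℂ)).symm fun p => x p.1 * y p.2

/-- The standard orthonormal basis vector `e_j` of `EuclideanSpace ℂ (Fin N)`. -/
def e {N : ℕ} (j : Fin N) : EuclideanSpace ℂ (Fin N) := EuclideanSpace.single j 1

open scoped ComplexInnerProductSpace in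
lemma inner_tp {ι κ : Type*} [Fintype ι] [Fintype κ]
    (a c : EuclideanSpace ℂ ι) (b d : EuclideanSpace ℂ κ) :
    ⟪tp a b, tp c d⟫ = ⟪a, c⟫ * ⟪b, d⟫ := by
  simp only [tp, PiLp.inner_apply, RCLike.inner_apply, WithLp.equiv_symm_apply, PiLp.toLp_apply,
    Fintype.sum_prod_type, map_mul, Finset.sum_mul_sum]
  exact Finset.sum_congr rfl fun i _ => Finset.sum_congr rfl fun j _ => by ring

lemma norm_tp {ι κ : Type*} [Fintype ι] [Fintype κ]
    (a : EuclideanSpace ℂ ι) (b : EuclideanSpace ℂ κ) :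
    ‖tp a b‖ = ‖a‖ * ‖b‖ := by
  rw [norm_eq_sqrt_re_inner (𝕜 := ℂ), inner_tp, inner_self_eq_norm_sq_to_K,
    inner_self_eq_norm_sq_to_K, ← RCLike.ofReal_pow, ← RCLike.ofReal_pow, ← RCLike.ofReal_mul,
    RCLike.ofReal_re, ← mul_pow, Real.sqrt_sq (by positivity)]

lemma sqrt_half_aux (s : ℝ) : (1/2 : ℝ) * Real.sqrt (2 * s) = Real.sqrt (s / 2) := by
  symm
  rw [show s / 2 = (1/2)^2 * (2 * s) by ring, Real.sqrt_mul (by positivity),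
    Real.sqrt_sq (by norm_num)]

open scoped ComplexInnerProductSpace in
/-- **Swap-test coefficients `α_k`, `β_k` of the abs-QADC state (Appendix).**  For a unit
vector `c` with coordinates `c_j` and `r_k = |c_k|`,
`‖(1/2)(c ⊗ e_k + e_k ⊗ c)‖ = √((1 + r_k²)/2)` and
`‖(1/2)(c ⊗ e_k - e_k ⊗ c)‖ = √((1 - r_k²)/2)`. -/
theorem abs_qadc_swap_test_coefficients (N : ℕ) (hN : 0 < N)
    (c : EuclideanSpace ℂ (Fin N)) (hc : ‖c‖ = 1) (k : Fin N) :
    ‖(1 / 2 : ℂ) • (tp c (e k) + tp (e k) c)‖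
        = Real.sqrt ((1 + ‖c k‖ ^ 2) / 2) ∧
    ‖(1 / 2 : ℂ) • (tp c (e k) - tp (e k) c)‖
        = Real.sqrt ((1 - ‖c k‖ ^ 2) / 2) := by
  set u := tp c (e k)
  set v := tp (e k) c
  have hek : ‖e k‖ = 1 := by simp [e]
  have hu : ‖u‖ = 1 := by rw [norm_tp, hc, hek, one_mul]
  have hv : ‖v‖ = 1 := by rw [norm_tp, hc, hek, one_mul]
  have huv : ⟪u, v⟫ = ((‖c k‖ ^ 2 : ℝ) : ℂ) := by
    rw [inner_tp]
    simp [e, RCLike.inner_apply, EuclideanSpace.inner_single_left,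
      EuclideanSpace.inner_single_right]
    rw [mul_comm, Complex.mul_conj, ← Complex.sq_norm]; push_cast; ring
  have hre : RCLike.re ⟪u, v⟫ = ‖c k‖ ^ 2 := by
    rw [huv]
    simp [RCLike.re_to_complex, ← Complex.ofReal_pow]
  have hhalf : ‖(1/2 : ℂ)‖ = (1/2 : ℝ) := by norm_num
  constructor
  · have hadd : ‖u + v‖ ^ 2 = 2 * (1 + ‖c k‖ ^ 2) := by
      rw [norm_add_sq (𝕜 := ℂ), hu, hv, hre]; ring
    have h2 : ‖u + v‖ = Real.sqrt (2 * (1 + ‖c k‖ ^ 2)) := by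
      rw [← hadd, Real.sqrt_sq (norm_nonneg _)]
    rw [norm_smul, hhalf, h2, sqrt_half_aux]
  · have hsub : ‖u - v‖ ^ 2 = 2 * (1 - ‖c k‖ ^ 2) := by
      rw [norm_sub_sq (𝕜 := ℂ), hu, hv, hre]; ring
    have h2 : ‖u - v‖ = Real.sqrt (2 * (1 - ‖c k‖ ^ 2)) := by
      rw [← hsub, Real.sqrt_sq (norm_nonneg _)]
    rw [norm_smul, hhalf, h2, sqrt_half_aux]
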